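/- If a ∩ b is a lower bound of a and b in the key poset (i.e., a ∩ b ⪯ a and a ∩ b ⪯ b), then a ∩ b is the unique greatest lower bound: any c with c ⪯ a and c ⪯ b satisfies c ⪯ a ∩ b. -/
import Mathlib


/-- The key poset order. -/
def KeyLE {n : ℕ} (a b : Fin n → ℕ) : Prop :=
  (∀ i, a i ≤ b i) ∧ ∀ i j : Fin n, i < j → a j < b j → a j < a i → b j < b i

/-- Strict key order. -/
def KeyLT {n : ℕ} (a b : Fin n → ℕ) : Prop := KeyLE a b ∧ a ≠ b

/-- If a ∩ b is a lower bound of a and b in the key poset, then it is the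
unique greatest lower bound: any common lower bound c satisfies c ⪯ a ∩ b. -/
theorem inter_greatest_lower_bound {n : ℕ} (a b : Fin n → ℕ)
    (ha : KeyLE (fun i => min (a i) (b i)) a)
    (hb : KeyLE (fun i => min (a i) (b i)) b) :
    ∀ c : Fin n → ℕ, KeyLE c a → KeyLE c b →
      KeyLE c (fun i => min (a i) (b i)) := by
  intro c hca hcb
  refine ⟨fun i => le_min (hca.1 i) (hcb.1 i), fun i j hij hj hci => ?_⟩
  simp only [lt_min_iff] at hj ⊢
  exact ⟨lt_of_le_of_lt (min_le_left _ _) (hca.2 i j hij hj.1 hci),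
    lt_of_le_of_lt (min_le_right _ _) (hcb.2 i j hij hj.2 hci)⟩
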